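/- Let v, f be integers with 0 ≤ f ≤ v-1 and v-f even. Under the action of the cyclic group generated by A_{v,f} on the 1-dimensional subspaces (points) of GF(2)^v, there are exactly 2^f - 1 fixed points, exactly (2^{v-f} - 1)/3 orbit lines, and exactly (2^{v-f} - 1)(2^f - 1)/3 orbit triangles. -/

import Mathlib

set_option maxHeartbeats 1000000


/-- The action of a matrix `A` on subspaces of `GF(2)^v`, induced by the
right action `x ↦ x ⬝ A` on vectors. -/
def mapMat {v : ℕ} (A : Matrix (Fin v) (Fin v) (ZMod 2))
    (W : Submodule (ZMod 2) (Fin v → ZMod 2)) : Submodule (ZMod 2) (Fin v → ZMod 2) :=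
  W.map A.vecMulLinear

/-- The block-diagonal matrix `A_{v,f}` over `GF(2)`: `(v-f)/2` consecutive 2×2 blocks
`[[0,1],[1,1]]` on the diagonal, followed by the `f×f` identity matrix. -/
def Avf (v f : ℕ) : Matrix (Fin v) (Fin v) (ZMod 2) :=
  Matrix.of fun i j =>
    if (i : ℕ) < v - f then
      if (i : ℕ) % 2 = 0 then (if (j : ℕ) = (i : ℕ) + 1 then 1 else 0)
      else (if (j : ℕ) = (i : ℕ) - 1 ∨ (j : ℕ) = (i : ℕ) then 1 else 0)
    else (if j = i then 1 else 0)

/-- `O` is an orbit of size 3 of the action of `⟨A_{v,f}⟩` on the points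
(1-dimensional subspaces) of `GF(2)^v`. -/
def IsPtOrbit3 (v f : ℕ) (O : Set (Submodule (ZMod 2) (Fin v → ZMod 2))) : Prop :=
  ∃ P : Submodule (ZMod 2) (Fin v → ZMod 2), Module.finrank (ZMod 2) P = 1 ∧
    O = {P, mapMat (Avf v f) P, mapMat (Avf v f) (mapMat (Avf v f) P)} ∧ O.ncard = 3

/-- An orbit of size 3 on points whose three points lie in a common 2-dimensional
subspace: an orbit line. -/
def IsOrbitLine (v f : ℕ) (O : Set (Submodule (ZMod 2) (Fin v → ZMod 2))) : Prop :=
  IsPtOrbit3 v f O ∧ ∃ L : Submodule (ZMod 2) (Fin v → ZMod 2),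
    Module.finrank (ZMod 2) L = 2 ∧ ∀ P ∈ O, P ≤ L

/-- An orbit of size 3 on points whose three points do not lie in a common
2-dimensional subspace: an orbit triangle. -/
def IsOrbitTriangle (v f : ℕ) (O : Set (Submodule (ZMod 2) (Fin v → ZMod 2))) : Prop :=
  IsPtOrbit3 v f O ∧ ¬ ∃ L : Submodule (ZMod 2) (Fin v → ZMod 2),
    Module.finrank (ZMod 2) L = 2 ∧ ∀ P ∈ O, P ≤ L

namespace Stmt3

open Matrix

variable {v f : ℕ}

lemma vecMul_eq_sum' (x : Fin v → ZMod 2) (j : Fin v) :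
    (x ᵥ* Avf v f) j = ∑ i, x i * Avf v f i j := rfl

lemma vm_tail (hvf : Even (v - f)) (x : Fin v → ZMod 2) (j : Fin v)
    (hj : v - f ≤ (j : ℕ)) : (x ᵥ* Avf v f) j = x j := by
  obtain ⟨t, ht⟩ := hvf
  rw [vecMul_eq_sum']
  rw [Finset.sum_eq_single_of_mem j (Finset.mem_univ _)]
  · simp only [Avf, Matrix.of_apply, Fin.ext_iff]
    split_ifs <;> first | omega | simp | simp_all
  · intro i _ hij
    have hij' : (i : ℕ) ≠ (j : ℕ) := fun h => hij (Fin.ext h)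
    simp only [Avf, Matrix.of_apply, Fin.ext_iff]
    split_ifs <;> first | omega | simp | simp_all

lemma vm_even (hvf : Even (v - f)) (x : Fin v → ZMod 2) (j j' : Fin v)
    (hj : (j : ℕ) < v - f) (he : (j : ℕ) % 2 = 0) (hj' : (j' : ℕ) = (j : ℕ) + 1) :
    (x ᵥ* Avf v f) j = x j' := by
  obtain ⟨t, ht⟩ := hvf
  rw [vecMul_eq_sum']
  rw [Finset.sum_eq_single_of_mem j' (Finset.mem_univ _)]
  · simp only [Avf, Matrix.of_apply, Fin.ext_iff]
    split_ifs <;> first | omega | simp | simp_all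
  · intro i _ hij
    have hij' : (i : ℕ) ≠ (j' : ℕ) := fun h => hij (Fin.ext h)
    simp only [Avf, Matrix.of_apply, Fin.ext_iff]
    split_ifs <;> first | omega | simp | simp_all

lemma vm_odd (hvf : Even (v - f)) (x : Fin v → ZMod 2) (j j' : Fin v)
    (hj : (j : ℕ) < v - f) (he : (j : ℕ) % 2 = 1) (hj' : (j' : ℕ) = (j : ℕ) - 1) :
    (x ᵥ* Avf v f) j = x j' + x j := by
  obtain ⟨t, ht⟩ := hvf
  have hjj' : j' ≠ j := by
    intro h; apply_fun (Fin.val) at h; omega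
  rw [vecMul_eq_sum']
  rw [← Finset.sum_erase_add _ _ (Finset.mem_univ j)]
  have h1 : ∑ i ∈ Finset.univ.erase j, x i * Avf v f i j = x j' := by
    rw [Finset.sum_eq_single_of_mem j' (Finset.mem_erase.2 ⟨hjj', Finset.mem_univ _⟩)]
    · simp only [Avf, Matrix.of_apply, Fin.ext_iff]
      split_ifs <;> first | omega | simp | simp_all
    · intro i hi hij
      have hij' : (i : ℕ) ≠ (j' : ℕ) := fun h => hij (Fin.ext h)
      have hijj : (i : ℕ) ≠ (j : ℕ) := fun h => (Finset.mem_erase.1 hi).1 (Fin.ext h)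
      simp only [Avf, Matrix.of_apply, Fin.ext_iff]
      split_ifs <;> first | omega | simp | simp_all
  have h2 : x j * Avf v f j j = x j := by
    simp only [Avf, Matrix.of_apply]
    rw [if_pos hj, if_neg (by omega), if_pos (Or.inr trivial), mul_one]
  rw [h1, h2]

/-- head-zero predicate -/
def Hz (v f : ℕ) (x : Fin v → ZMod 2) : Prop := ∀ j : Fin v, (j : ℕ) < v - f → x j = 0
/-- tail-zero predicate -/
def Tz (v f : ℕ) (x : Fin v → ZMod 2) : Prop := ∀ j : Fin v, v - f ≤ (j : ℕ) → x j = 0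

variable (hvf : Even (v - f))
include hvf

lemma fixed_iff (x : Fin v → ZMod 2) : x ᵥ* Avf v f = x ↔ Hz v f x := by
  obtain ⟨t, ht⟩ := id hvf
  constructor
  · intro hfix j hj
    rcases Nat.even_or_odd (j : ℕ) with hp | hp
    · have hp' : (j : ℕ) % 2 = 0 := Nat.even_iff.1 hp
      set j1 : Fin v := ⟨(j : ℕ) + 1, by omega⟩ with hj1
      have h1 := congrFun hfix j1
      rw [vm_odd hvf x j1 j (by simp [hj1]; omega) (by simp [hj1]; omega) (by simp [hj1])] at h1
      exact (add_eq_right).1 h1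
    · have hp' : (j : ℕ) % 2 = 1 := Nat.odd_iff.1 hp
      set j0 : Fin v := ⟨(j : ℕ) - 1, by omega⟩ with hj0
      have h1 := congrFun hfix j0
      rw [vm_even hvf x j0 j (by simp [hj0]; omega) (by simp [hj0]; omega) (by simp [hj0]; omega)] at h1
      have h2 := congrFun hfix j
      rw [vm_odd hvf x j j0 hj hp' (by simp [hj0])] at h2
      have h3 : x j0 = 0 := (add_eq_right).1 h2
      rw [h1]; exact h3
  · intro h
    funext j
    by_cases hj : (j : ℕ) < v - f
    · rcases Nat.even_or_odd (j : ℕ) with hp | hp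
      · have hp' : (j : ℕ) % 2 = 0 := Nat.even_iff.1 hp
        rw [vm_even hvf x j ⟨(j : ℕ) + 1, by omega⟩ hj hp' (by simp)]
        rw [h _ (by simp; omega), h _ hj]
      · have hp' : (j : ℕ) % 2 = 1 := Nat.odd_iff.1 hp
        rw [vm_odd hvf x j ⟨(j : ℕ) - 1, by omega⟩ hj hp' (by simp)]
        rw [h _ (by simp; omega), h _ hj, add_zero]
    · rw [vm_tail hvf x j (by omega)]

lemma ord3 (x : Fin v → ZMod 2) : ((x ᵥ* Avf v f) ᵥ* Avf v f) ᵥ* Avf v f = x := by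
  obtain ⟨t, ht⟩ := id hvf
  have hc1 : ∀ a b : ZMod 2, a + (b + a) = b := by decide
  funext j
  by_cases hj : (j : ℕ) < v - f
  · rcases Nat.even_or_odd (j : ℕ) with hp | hp
    · have hp' : (j : ℕ) % 2 = 0 := Nat.even_iff.1 hp
      set j1 : Fin v := ⟨(j : ℕ) + 1, by omega⟩ with hj1
      have hv1 : (j1 : ℕ) < v - f := by simp [hj1]; omega
      have ho1 : (j1 : ℕ) % 2 = 1 := by simp [hj1]; omega
      have hd1 : (j : ℕ) = (j1 : ℕ) - 1 := by simp [hj1]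
      have hu1 : (j1 : ℕ) = (j : ℕ) + 1 := by simp [hj1]
      have e1 : (x ᵥ* Avf v f) j = x j1 := vm_even hvf x j j1 hj hp' hu1
      have e2 : (x ᵥ* Avf v f) j1 = x j + x j1 := vm_odd hvf x j1 j hv1 ho1 hd1
      have e3 : ((x ᵥ* Avf v f) ᵥ* Avf v f) j = (x ᵥ* Avf v f) j1 :=
        vm_even hvf (x ᵥ* Avf v f) j j1 hj hp' hu1
      have e4 : (((x ᵥ* Avf v f) ᵥ* Avf v f) ᵥ* Avf v f) j
          = ((x ᵥ* Avf v f) ᵥ* Avf v f) j1 :=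
        vm_even hvf ((x ᵥ* Avf v f) ᵥ* Avf v f) j j1 hj hp' hu1
      have e5 : ((x ᵥ* Avf v f) ᵥ* Avf v f) j1
          = (x ᵥ* Avf v f) j + (x ᵥ* Avf v f) j1 :=
        vm_odd hvf (x ᵥ* Avf v f) j1 j hv1 ho1 hd1
      rw [e4, e5, e2, e1]
      exact hc1 _ _
    · have hp' : (j : ℕ) % 2 = 1 := Nat.odd_iff.1 hp
      set j0 : Fin v := ⟨(j : ℕ) - 1, by omega⟩ with hj0
      have hv0 : (j0 : ℕ) < v - f := by simp [hj0]; omega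
      have he0 : (j0 : ℕ) % 2 = 0 := by simp [hj0]; omega
      have hd0 : (j0 : ℕ) = (j : ℕ) - 1 := by simp [hj0]
      have hu0 : (j : ℕ) = (j0 : ℕ) + 1 := by simp [hj0]; omega
      have e1 : (x ᵥ* Avf v f) j = x j0 + x j := vm_odd hvf x j j0 hj hp' hd0
      have e2 : (x ᵥ* Avf v f) j0 = x j := vm_even hvf x j0 j hv0 he0 hu0
      have e3 : ((x ᵥ* Avf v f) ᵥ* Avf v f) j
          = (x ᵥ* Avf v f) j0 + (x ᵥ* Avf v f) j :=
        vm_odd hvf (x ᵥ* Avf v f) j j0 hj hp' hd0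
      have e4 : ((x ᵥ* Avf v f) ᵥ* Avf v f) j0 = (x ᵥ* Avf v f) j :=
        vm_even hvf (x ᵥ* Avf v f) j0 j hv0 he0 hu0
      have e5 : (((x ᵥ* Avf v f) ᵥ* Avf v f) ᵥ* Avf v f) j
          = ((x ᵥ* Avf v f) ᵥ* Avf v f) j0 + ((x ᵥ* Avf v f) ᵥ* Avf v f) j :=
        vm_odd hvf ((x ᵥ* Avf v f) ᵥ* Avf v f) j j0 hj hp' hd0
      rw [e5, e4, e3, e2]
      exact hc1 _ _
  · have e1 : (x ᵥ* Avf v f) j = x j := vm_tail hvf x j (by omega)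
    have e2 : ((x ᵥ* Avf v f) ᵥ* Avf v f) j = (x ᵥ* Avf v f) j :=
      vm_tail hvf (x ᵥ* Avf v f) j (by omega)
    have e3 : (((x ᵥ* Avf v f) ᵥ* Avf v f) ᵥ* Avf v f) j
        = ((x ᵥ* Avf v f) ᵥ* Avf v f) j :=
      vm_tail hvf ((x ᵥ* Avf v f) ᵥ* Avf v f) j (by omega)
    rw [e3, e2, e1]

lemma sum3 (x : Fin v → ZMod 2) (j : Fin v) :
    x j + (x ᵥ* Avf v f) j + ((x ᵥ* Avf v f) ᵥ* Avf v f) j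
      = if (j : ℕ) < v - f then 0 else x j := by
  obtain ⟨t, ht⟩ := id hvf
  have hc2 : ∀ a b : ZMod 2, a + b + (a + b) = 0 := by decide
  have hc3 : ∀ a b : ZMod 2, a + (b + a) + b = 0 := by decide
  have hc4 : ∀ a : ZMod 2, a + a + a = a := by decide
  by_cases hj : (j : ℕ) < v - f
  · rw [if_pos hj]
    rcases Nat.even_or_odd (j : ℕ) with hp | hp
    · have hp' : (j : ℕ) % 2 = 0 := Nat.even_iff.1 hp
      set j1 : Fin v := ⟨(j : ℕ) + 1, by omega⟩ with hj1
      have hv1 : (j1 : ℕ) < v - f := by simp [hj1]; omega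
      have ho1 : (j1 : ℕ) % 2 = 1 := by simp [hj1]; omega
      have hd1 : (j : ℕ) = (j1 : ℕ) - 1 := by simp [hj1]
      have hu1 : (j1 : ℕ) = (j : ℕ) + 1 := by simp [hj1]
      have e1 : (x ᵥ* Avf v f) j = x j1 := vm_even hvf x j j1 hj hp' hu1
      have e2 : (x ᵥ* Avf v f) j1 = x j + x j1 := vm_odd hvf x j1 j hv1 ho1 hd1
      have e3 : ((x ᵥ* Avf v f) ᵥ* Avf v f) j = (x ᵥ* Avf v f) j1 :=
        vm_even hvf (x ᵥ* Avf v f) j j1 hj hp' hu1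
      rw [e3, e2, e1]
      exact hc2 _ _
    · have hp' : (j : ℕ) % 2 = 1 := Nat.odd_iff.1 hp
      set j0 : Fin v := ⟨(j : ℕ) - 1, by omega⟩ with hj0
      have hv0 : (j0 : ℕ) < v - f := by simp [hj0]; omega
      have he0 : (j0 : ℕ) % 2 = 0 := by simp [hj0]; omega
      have hd0 : (j0 : ℕ) = (j : ℕ) - 1 := by simp [hj0]
      have hu0 : (j : ℕ) = (j0 : ℕ) + 1 := by simp [hj0]; omega
      have e1 : (x ᵥ* Avf v f) j = x j0 + x j := vm_odd hvf x j j0 hj hp' hd0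
      have e2 : (x ᵥ* Avf v f) j0 = x j := vm_even hvf x j0 j hv0 he0 hu0
      have e3 : ((x ᵥ* Avf v f) ᵥ* Avf v f) j
          = (x ᵥ* Avf v f) j0 + (x ᵥ* Avf v f) j :=
        vm_odd hvf (x ᵥ* Avf v f) j j0 hj hp' hd0
      rw [e3, e2, e1]
      exact hc2 _ _
  · rw [if_neg hj]
    have e1 : (x ᵥ* Avf v f) j = x j := vm_tail hvf x j (by omega)
    have e2 : ((x ᵥ* Avf v f) ᵥ* Avf v f) j = (x ᵥ* Avf v f) j :=
      vm_tail hvf (x ᵥ* Avf v f) j (by omega)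
    rw [e2, e1]
    exact hc4 _



lemma vm_eq_zero (x : Fin v → ZMod 2) (h : x ᵥ* Avf v f = 0) : x = 0 := by
  have := ord3 hvf x
  rw [h, Matrix.zero_vecMul, Matrix.zero_vecMul] at this
  exact this.symm

lemma dist2 (x : Fin v → ZMod 2) (h : x ᵥ* Avf v f ≠ x) :
    (x ᵥ* Avf v f) ᵥ* Avf v f ≠ x := by
  intro he
  apply h
  have := congrArg (· ᵥ* Avf v f) he
  rw [ord3 hvf x] at this
  exact this.symm

lemma dist3 (x : Fin v → ZMod 2) (h : x ᵥ* Avf v f ≠ x) :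
    (x ᵥ* Avf v f) ᵥ* Avf v f ≠ x ᵥ* Avf v f := by
  intro he
  apply h
  have := congrArg (· ᵥ* Avf v f) he
  rw [ord3 hvf x] at this
  rw [← this] at he
  exact he.symm

omit hvf in
lemma zero_iff_hz_tz (x : Fin v → ZMod 2) : x = 0 ↔ Hz v f x ∧ Tz v f x := by
  constructor
  · rintro rfl; exact ⟨fun j _ => rfl, fun j _ => rfl⟩
  · rintro ⟨h1, h2⟩
    funext j
    by_cases hj : (j : ℕ) < v - f
    · exact h1 j hj
    · exact h2 j (by omega)

lemma hz_vm_iff (x : Fin v → ZMod 2) : Hz v f (x ᵥ* Avf v f) ↔ Hz v f x := by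
  constructor
  · intro h
    have h2 : (x ᵥ* Avf v f) ᵥ* Avf v f = x ᵥ* Avf v f := (fixed_iff hvf _).2 h
    have h3 := congrArg (· ᵥ* Avf v f) h2
    rw [ord3 hvf x] at h3
    rw [h2] at h3
    exact (fixed_iff hvf x).1 h3.symm
  · intro h
    have h2 : x ᵥ* Avf v f = x := (fixed_iff hvf x).2 h
    rw [h2]; exact h
    
lemma tz_vm_iff (x : Fin v → ZMod 2) : Tz v f (x ᵥ* Avf v f) ↔ Tz v f x := by
  constructor
  · intro h j hj
    have := h j hj
    rw [vm_tail hvf x j hj] at this; exact this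
  · intro h j hj
    rw [vm_tail hvf x j hj]; exact h j hj

omit hvf

open Submodule

lemma span_eq_span_iff (x y : Fin v → ZMod 2) (hx : x ≠ 0) (hy : y ≠ 0) :
    span (ZMod 2) {x} = span (ZMod 2) {y} ↔ x = y := by
  constructor
  · intro h
    have hm : y ∈ span (ZMod 2) {x} := h ▸ mem_span_singleton_self y
    obtain ⟨c, hc⟩ := (mem_span_singleton).1 hm
    rcases (by decide : ∀ c : ZMod 2, c = 0 ∨ c = 1) c with rfl | rfl
    · rw [zero_smul] at hc; exact absurd hc.symm hy
    · rw [one_smul] at hc; exact hc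
  · rintro rfl; rfl

lemma finrank_one_iff (P : Submodule (ZMod 2) (Fin v → ZMod 2)) :
    Module.finrank (ZMod 2) P = 1 ↔ ∃ x, x ≠ 0 ∧ P = span (ZMod 2) {x} := by
  constructor
  · intro h
    obtain ⟨w, hw0, hw⟩ := finrank_eq_one_iff'.1 h
    refine ⟨w.1, fun hh => hw0 (Subtype.ext hh), le_antisymm ?_ ?_⟩
    · intro z hz
      obtain ⟨c, hc⟩ := hw ⟨z, hz⟩
      exact (mem_span_singleton).2 ⟨c, congrArg Subtype.val hc⟩
    · rw [span_le, Set.singleton_subset_iff]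
      exact w.2
  · rintro ⟨x, hx, rfl⟩
    exact finrank_span_singleton hx

lemma mapMat_span (x : Fin v → ZMod 2) :
    mapMat (Avf v f) (span (ZMod 2) {x}) = span (ZMod 2) {x ᵥ* Avf v f} := by
  rw [mapMat, Submodule.map_span, Set.image_singleton, Matrix.vecMulLinear_apply]

lemma range_pair (x y : Fin v → ZMod 2) : Set.range ![x, y] = {x, y} := by
  ext z
  simp only [Set.mem_range, Fin.exists_fin_two, Matrix.cons_val_zero, Matrix.cons_val_one,
    Matrix.head_cons, Set.mem_insert_iff, Set.mem_singleton_iff]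
  tauto

lemma pair_indep (x y : Fin v → ZMod 2) (hx : x ≠ 0) (hy : y ≠ 0) (hxy : x ≠ y) :
    LinearIndependent (ZMod 2) ![x, y] := by
  rw [LinearIndependent.pair_iff' hx]
  intro a
  rcases (by decide : ∀ c : ZMod 2, c = 0 ∨ c = 1) a with rfl | rfl
  · rw [zero_smul]; exact fun h => hy h.symm
  · rw [one_smul]; exact hxy

lemma finrank_span_pair (x y : Fin v → ZMod 2) (hx : x ≠ 0) (hy : y ≠ 0) (hxy : x ≠ y) :
    Module.finrank (ZMod 2) (span (ZMod 2) ({x, y} : Set (Fin v → ZMod 2))) = 2 := by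
  rw [← range_pair x y, finrank_span_eq_card (pair_indep x y hx hy hxy)]
  simp

/-- the orbit of the point spanned by `x` -/
def orb (v f : ℕ) (x : Fin v → ZMod 2) : Set (Submodule (ZMod 2) (Fin v → ZMod 2)) :=
  {span (ZMod 2) {x}, span (ZMod 2) {x ᵥ* Avf v f},
    span (ZMod 2) {(x ᵥ* Avf v f) ᵥ* Avf v f}}

lemma orb_eq_mapMat (x : Fin v → ZMod 2) :
    ({span (ZMod 2) {x}, mapMat (Avf v f) (span (ZMod 2) {x}),
      mapMat (Avf v f) (mapMat (Avf v f) (span (ZMod 2) {x}))} :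
      Set (Submodule (ZMod 2) (Fin v → ZMod 2))) = orb v f x := by
  rw [mapMat_span, mapMat_span, orb]

include hvf

lemma vm_ne_zero (x : Fin v → ZMod 2) (hx : x ≠ 0) : x ᵥ* Avf v f ≠ 0 := by
  intro h
  exact hx (vm_eq_zero hvf x h)

lemma vm2_ne_zero (x : Fin v → ZMod 2) (hx : x ≠ 0) :
    (x ᵥ* Avf v f) ᵥ* Avf v f ≠ 0 :=
  vm_ne_zero hvf _ (vm_ne_zero hvf x hx)

lemma orb_ncard (x : Fin v → ZMod 2) (hx : x ≠ 0) (hfx : x ᵥ* Avf v f ≠ x) :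
    (orb v f x).ncard = 3 := by
  rw [Set.ncard_eq_three]
  refine ⟨_, _, _, ?_, ?_, ?_, rfl⟩
  · rw [Ne, span_eq_span_iff x _ hx (vm_ne_zero hvf x hx)]
    exact fun h => hfx h.symm
  · rw [Ne, span_eq_span_iff x _ hx (vm2_ne_zero hvf x hx)]
    exact fun h => dist2 hvf x hfx h.symm
  · rw [Ne, span_eq_span_iff _ _ (vm_ne_zero hvf x hx) (vm2_ne_zero hvf x hx)]
    exact fun h => dist3 hvf x hfx h.symm

lemma isPtOrbit3_orb (x : Fin v → ZMod 2) (hx : x ≠ 0) (hfx : x ᵥ* Avf v f ≠ x) :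
    IsPtOrbit3 v f (orb v f x) :=
  ⟨span (ZMod 2) {x}, finrank_span_singleton hx, (orb_eq_mapMat x).symm,
    orb_ncard hvf x hx hfx⟩

lemma orb_rot (x : Fin v → ZMod 2) : orb v f (x ᵥ* Avf v f) = orb v f x := by
  have h3 := ord3 hvf x
  rw [orb, orb, h3]
  ext P
  simp only [Set.mem_insert_iff, Set.mem_singleton_iff]
  tauto

lemma orb_eq_iff (x y : Fin v → ZMod 2) (hx : x ≠ 0) (hy : y ≠ 0) :
    orb v f y = orb v f x ↔
      (y = x ∨ y = x ᵥ* Avf v f ∨ y = (x ᵥ* Avf v f) ᵥ* Avf v f) := by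
  constructor
  · intro h
    have hmem : span (ZMod 2) {y} ∈ orb v f x := by
      rw [← h]; exact Set.mem_insert _ _
    simp only [orb, Set.mem_insert_iff, Set.mem_singleton_iff] at hmem
    rcases hmem with h1 | h1 | h1
    · exact Or.inl ((span_eq_span_iff y x hy hx).1 h1)
    · exact Or.inr (Or.inl ((span_eq_span_iff y _ hy (vm_ne_zero hvf x hx)).1 h1))
    · exact Or.inr (Or.inr ((span_eq_span_iff y _ hy (vm2_ne_zero hvf x hx)).1 h1))
  · rintro (rfl | rfl | rfl)
    · rfl
    · exact orb_rot hvf x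
    · rw [orb_rot hvf (x ᵥ* Avf v f), orb_rot hvf x]

lemma line_iff (x : Fin v → ZMod 2) (hx : x ≠ 0) (hfx : x ᵥ* Avf v f ≠ x) :
    (∃ L : Submodule (ZMod 2) (Fin v → ZMod 2),
      Module.finrank (ZMod 2) L = 2 ∧ ∀ P ∈ orb v f x, P ≤ L) ↔ Tz v f x := by
  have hxA : x ≠ x ᵥ* Avf v f := fun h => hfx h.symm
  have hA0 : x ᵥ* Avf v f ≠ 0 := vm_ne_zero hvf x hx
  have hA20 : (x ᵥ* Avf v f) ᵥ* Avf v f ≠ 0 := vm2_ne_zero hvf x hx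
  have hc5 : ∀ a b : ZMod 2, a + b + (a + b) = 0 := by decide
  constructor
  · rintro ⟨L, hL2, hle⟩
    have hxL : x ∈ L := hle _ (Set.mem_insert _ _) (mem_span_singleton_self x)
    have hAL : x ᵥ* Avf v f ∈ L :=
      hle _ (Set.mem_insert_of_mem _ (Set.mem_insert _ _)) (mem_span_singleton_self _)
    have hA2L : (x ᵥ* Avf v f) ᵥ* Avf v f ∈ L :=
      hle _ (Set.mem_insert_of_mem _ (Set.mem_insert_of_mem _ rfl))
        (mem_span_singleton_self _)
    have hsple : span (ZMod 2) ({x, x ᵥ* Avf v f} : Set (Fin v → ZMod 2)) ≤ L := by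
      rw [span_le]
      intro z hz
      simp only [Set.mem_insert_iff, Set.mem_singleton_iff] at hz
      rcases hz with rfl | rfl
      · exact hxL
      · exact hAL
    have heq : span (ZMod 2) ({x, x ᵥ* Avf v f} : Set (Fin v → ZMod 2)) = L :=
      Submodule.eq_of_le_of_finrank_le hsple
        (by rw [hL2, finrank_span_pair x _ hx hA0 hxA])
    rw [← heq] at hA2L
    obtain ⟨a, b, hab⟩ := Submodule.mem_span_pair.1 hA2L
    rcases (by decide : ∀ c : ZMod 2, c = 0 ∨ c = 1) a with rfl | rfl <;>
      rcases (by decide : ∀ c : ZMod 2, c = 0 ∨ c = 1) b with rfl | rfl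
    · rw [zero_smul, zero_smul, add_zero] at hab
      exact absurd hab.symm hA20
    · rw [zero_smul, one_smul, zero_add] at hab
      exact absurd hab.symm (dist3 hvf x hfx)
    · rw [one_smul, zero_smul, add_zero] at hab
      exact absurd hab.symm (dist2 hvf x hfx)
    · rw [one_smul, one_smul] at hab
      intro j hj
      have hs := sum3 hvf x j
      rw [if_neg (by omega)] at hs
      have hcf := congrFun hab j
      simp only [Pi.add_apply] at hcf
      rw [← hcf, hc5] at hs
      exact hs.symm
  · intro htz
    refine ⟨span (ZMod 2) ({x, x ᵥ* Avf v f} : Set (Fin v → ZMod 2)),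
      finrank_span_pair x _ hx hA0 hxA, ?_⟩
    have hsum : (x ᵥ* Avf v f) ᵥ* Avf v f = x + x ᵥ* Avf v f := by
      funext j
      have hs := sum3 hvf x j
      have hz : (if (j : ℕ) < v - f then (0 : ZMod 2) else x j) = 0 := by
        split_ifs with h
        · rfl
        · exact htz j (by omega)
      rw [hz] at hs
      have hc6 : ∀ a b c : ZMod 2, a + b + c = 0 → c = a + b := by decide
      rw [Pi.add_apply]
      exact hc6 _ _ _ hs
    intro P hP
    simp only [orb, Set.mem_insert_iff, Set.mem_singleton_iff] at hP
    rcases hP with rfl | rfl | rfl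
    · exact span_mono (Set.singleton_subset_iff.2 (Set.mem_insert _ _))
    · exact span_mono (Set.singleton_subset_iff.2 (Set.mem_insert_of_mem _ rfl))
    · rw [hsum, span_le, Set.singleton_subset_iff]
      exact add_mem (subset_span (Set.mem_insert _ _))
        (subset_span (Set.mem_insert_of_mem _ rfl))

omit hvf

/-- generic 3-to-1 counting lemma -/
lemma three_to_one {α β : Type*} [Fintype α] (F : α → β) (σ : α → α)
    (hne : ∀ a : α, a ≠ σ a ∧ a ≠ σ (σ a) ∧ σ a ≠ σ (σ a))
    (hiff : ∀ a b : α, F b = F a ↔ (b = a ∨ b = σ a ∨ b = σ (σ a))) :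
    Fintype.card α = 3 * Nat.card (Set.range F) := by
  classical
  have hset : Set.range F = ↑(Finset.univ.image F) := by
    rw [Finset.coe_image, Finset.coe_univ, Set.image_univ]
  rw [hset, Nat.card_coe_set_eq, Set.ncard_coe_finset]
  rw [← Finset.card_univ, Finset.card_eq_sum_card_image F Finset.univ]
  have hfib : ∀ b ∈ Finset.univ.image F,
      (Finset.univ.filter fun a => F a = b).card = 3 := by
    intro b hb
    obtain ⟨a, -, rfl⟩ := Finset.mem_image.1 hb
    have hflt : (Finset.univ.filter fun c => F c = F a) = {a, σ a, σ (σ a)} := by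
      ext c
      simp only [Finset.mem_filter, Finset.mem_univ, true_and, Finset.mem_insert,
        Finset.mem_singleton]
      exact hiff a c
    obtain ⟨h1, h2, h3⟩ := hne a
    rw [hflt, Finset.card_insert_of_notMem (by simp [h1, h2]),
      Finset.card_insert_of_notMem (by simp [h3]), Finset.card_singleton]
  rw [Finset.sum_congr rfl hfib, Finset.sum_const, smul_eq_mul, mul_comm]

/-- the index equivalence -/
def esum (hmf : v - f + f = v) : Fin (v - f) ⊕ Fin f ≃ Fin v :=
  finSumFinEquiv.trans (finCongr hmf)

lemma esum_inl (hmf : v - f + f = v) (k : Fin (v - f)) :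
    ((esum hmf (Sum.inl k) : Fin v) : ℕ) = (k : ℕ) := by
  simp [esum]

lemma esum_inr (hmf : v - f + f = v) (k : Fin f) :
    ((esum hmf (Sum.inr k) : Fin v) : ℕ) = v - f + (k : ℕ) := by
  simp [esum]

/-- splitting of the coordinates -/
def Esplit (hmf : v - f + f = v) :
    (Fin v → ZMod 2) ≃ (Fin (v - f) → ZMod 2) × (Fin f → ZMod 2) :=
  (Equiv.arrowCongr (esum hmf).symm (Equiv.refl _)).trans
    (Equiv.sumArrowEquivProdArrow _ _ _)

lemma Esplit_fst (hmf : v - f + f = v) (x : Fin v → ZMod 2) (k : Fin (v - f)) :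
    (Esplit hmf x).1 k = x (esum hmf (Sum.inl k)) := by
  simp [Esplit, Equiv.sumArrowEquivProdArrow, Equiv.arrowCongr]

lemma Esplit_snd (hmf : v - f + f = v) (x : Fin v → ZMod 2) (k : Fin f) :
    (Esplit hmf x).2 k = x (esum hmf (Sum.inr k)) := by
  simp [Esplit, Equiv.sumArrowEquivProdArrow, Equiv.arrowCongr]

lemma hz_iff (hmf : v - f + f = v) (x : Fin v → ZMod 2) :
    Hz v f x ↔ (Esplit hmf x).1 = 0 := by
  constructor
  · intro h
    funext k
    rw [Esplit_fst]
    exact h _ (by rw [esum_inl]; omega)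
  · intro h j hj
    have hk := congrFun h ⟨(j : ℕ), hj⟩
    rw [Esplit_fst] at hk
    have hje : j = esum hmf (Sum.inl ⟨(j : ℕ), hj⟩) := by
      apply Fin.ext; rw [esum_inl]
    rw [hje]; exact hk

lemma tz_iff (hmf : v - f + f = v) (x : Fin v → ZMod 2) :
    Tz v f x ↔ (Esplit hmf x).2 = 0 := by
  constructor
  · intro h
    funext k
    rw [Esplit_snd]
    exact h _ (by rw [esum_inr]; omega)
  · intro h j hj
    have hjv : (j : ℕ) - (v - f) < f := by omega
    have hk := congrFun h ⟨(j : ℕ) - (v - f), hjv⟩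
    rw [Esplit_snd] at hk
    have hje : j = esum hmf (Sum.inr ⟨(j : ℕ) - (v - f), hjv⟩) := by
      apply Fin.ext; rw [esum_inr]; simp only [Fin.val_mk]; omega
    rw [hje]; exact hk

lemma zero_iff (hmf : v - f + f = v) (x : Fin v → ZMod 2) :
    x = 0 ↔ (Esplit hmf x).1 = 0 ∧ (Esplit hmf x).2 = 0 := by
  rw [zero_iff_hz_tz, hz_iff hmf, tz_iff hmf]

lemma card_ne_zero_fun (n : ℕ) :
    Nat.card {y : Fin n → ZMod 2 // y ≠ 0} = 2 ^ n - 1 := by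
  rw [Nat.card_eq_fintype_card]
  have h1 := Fintype.card_subtype_compl (fun y : Fin n → ZMod 2 => y = 0)
  rw [Fintype.card_subtype_eq] at h1
  have h2 : Fintype.card (Fin n → ZMod 2) = 2 ^ n := by
    rw [Fintype.card_fun]; simp
  rw [h2] at h1
  exact h1

lemma card_eq_zero_fun (n : ℕ) :
    Nat.card {y : Fin n → ZMod 2 // y = 0} = 1 := by
  rw [Nat.card_eq_fintype_card, Fintype.card_subtype_eq]

lemma card_T1 (hmf : v - f + f = v) :
    Nat.card {x : Fin v → ZMod 2 // x ≠ 0 ∧ Hz v f x} = 2 ^ f - 1 := by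
  have e1 : {x : Fin v → ZMod 2 // x ≠ 0 ∧ Hz v f x} ≃
      {p : (Fin (v - f) → ZMod 2) × (Fin f → ZMod 2) // p.1 = 0 ∧ p.2 ≠ 0} := by
    refine (Esplit hmf).subtypeEquiv fun x => ?_
    simp only [ne_eq, zero_iff hmf, hz_iff hmf]
    tauto
  rw [Nat.card_congr (e1.trans (Equiv.subtypeProdEquivProd (p := fun a => a = 0) (q := fun b => ¬ b = 0))), Nat.card_prod,
    card_eq_zero_fun, card_ne_zero_fun, one_mul]

lemma card_T2 (hmf : v - f + f = v) :
    Nat.card {x : Fin v → ZMod 2 // x ≠ 0 ∧ Tz v f x} = 2 ^ (v - f) - 1 := by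
  have e1 : {x : Fin v → ZMod 2 // x ≠ 0 ∧ Tz v f x} ≃
      {p : (Fin (v - f) → ZMod 2) × (Fin f → ZMod 2) // p.1 ≠ 0 ∧ p.2 = 0} := by
    refine (Esplit hmf).subtypeEquiv fun x => ?_
    simp only [ne_eq, zero_iff hmf, tz_iff hmf]
    tauto
  rw [Nat.card_congr (e1.trans (Equiv.subtypeProdEquivProd (p := fun a => ¬ a = 0) (q := fun b => b = 0))), Nat.card_prod,
    card_eq_zero_fun, card_ne_zero_fun, mul_one]

lemma card_T3 (hmf : v - f + f = v) :
    Nat.card {x : Fin v → ZMod 2 // ¬ Hz v f x ∧ ¬ Tz v f x}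
      = (2 ^ (v - f) - 1) * (2 ^ f - 1) := by
  have e1 : {x : Fin v → ZMod 2 // ¬ Hz v f x ∧ ¬ Tz v f x} ≃
      {p : (Fin (v - f) → ZMod 2) × (Fin f → ZMod 2) // p.1 ≠ 0 ∧ p.2 ≠ 0} := by
    refine (Esplit hmf).subtypeEquiv fun x => ?_
    simp only [ne_eq, hz_iff hmf, tz_iff hmf]
  rw [Nat.card_congr (e1.trans (Equiv.subtypeProdEquivProd (p := fun a => ¬ a = 0) (q := fun b => ¬ b = 0))), Nat.card_prod,
    card_ne_zero_fun, card_ne_zero_fun]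

end Stmt3

open Matrix Submodule Stmt3 in
/-- Under the action of `⟨A_{v,f}⟩` on the points of `GF(2)^v` there are exactly
`2^f - 1` fixed points, `(2^{v-f} - 1)/3` orbit lines and
`(2^{v-f} - 1)(2^f - 1)/3` orbit triangles. -/
theorem stmt3 (v f : ℕ) (hf : f ≤ v - 1) (hvf : Even (v - f)) :
    Nat.card {P : Submodule (ZMod 2) (Fin v → ZMod 2) |
        Module.finrank (ZMod 2) P = 1 ∧ mapMat (Avf v f) P = P} = 2 ^ f - 1 ∧
    Nat.card {O : Set (Submodule (ZMod 2) (Fin v → ZMod 2)) | IsOrbitLine v f O}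
        = (2 ^ (v - f) - 1) / 3 ∧
    Nat.card {O : Set (Submodule (ZMod 2) (Fin v → ZMod 2)) | IsOrbitTriangle v f O}
        = (2 ^ (v - f) - 1) * (2 ^ f - 1) / 3 := by
  classical
  have hmf : v - f + f = v := by omega
  have hnfix3 : ∀ x : Fin v → ZMod 2, (orb v f x).ncard = 3 → x ᵥ* Avf v f ≠ x := by
    intro x h3 h
    rw [orb, h, h] at h3
    have hone : ({span (ZMod 2) {x}, span (ZMod 2) {x}, span (ZMod 2) {x}} :
        Set (Submodule (ZMod 2) (Fin v → ZMod 2))) = {span (ZMod 2) {x}} := by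
      simp
    rw [hone, Set.ncard_singleton] at h3
    omega
  refine ⟨?_, ?_, ?_⟩
  -- fixed points
  · have hbij : Function.Bijective
        (fun a : {x : Fin v → ZMod 2 // x ≠ 0 ∧ Hz v f x} =>
          (⟨span (ZMod 2) {a.1}, (finrank_one_iff _).2 ⟨a.1, a.2.1, rfl⟩, by
            rw [mapMat_span, (fixed_iff hvf a.1).2 a.2.2]⟩ :
            {P : Submodule (ZMod 2) (Fin v → ZMod 2) |
              Module.finrank (ZMod 2) P = 1 ∧ mapMat (Avf v f) P = P})) := by
      constructor
      · intro a b hab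
        apply Subtype.ext
        have h := congrArg Subtype.val hab
        simp only at h
        exact (span_eq_span_iff _ _ a.2.1 b.2.1).1 h
      · rintro ⟨P, h1, h2⟩
        obtain ⟨x, hx0, rfl⟩ := (finrank_one_iff P).1 h1
        rw [mapMat_span] at h2
        have hfix : x ᵥ* Avf v f = x :=
          (span_eq_span_iff _ _ (vm_ne_zero hvf x hx0) hx0).1 h2
        exact ⟨⟨x, hx0, (fixed_iff hvf x).1 hfix⟩, Subtype.ext rfl⟩
    rw [← card_T1 (v := v) (f := f) hmf]
    exact (Nat.card_congr (Equiv.ofBijective _ hbij)).symm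
  -- orbit lines
  · have hT : ∀ a : {x : Fin v → ZMod 2 // x ≠ 0 ∧ Tz v f x},
        a.1 ᵥ* Avf v f ≠ a.1 := by
      intro a h
      exact a.2.1 ((zero_iff_hz_tz a.1).2 ⟨(fixed_iff hvf a.1).1 h, a.2.2⟩)
    have key := three_to_one
      (α := {x : Fin v → ZMod 2 // x ≠ 0 ∧ Tz v f x})
      (fun a => orb v f a.1)
      (fun a => ⟨a.1 ᵥ* Avf v f, vm_ne_zero hvf a.1 a.2.1, (tz_vm_iff hvf a.1).2 a.2.2⟩)
      (fun a => ⟨fun h => hT a (congrArg Subtype.val h).symm,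
        fun h => dist2 hvf a.1 (hT a) (congrArg Subtype.val h).symm,
        fun h => dist3 hvf a.1 (hT a) (congrArg Subtype.val h).symm⟩)
      (fun a b => by
        have h := orb_eq_iff hvf a.1 b.1 a.2.1 b.2.1
        simpa [Subtype.ext_iff] using h)
    have hset : {O : Set (Submodule (ZMod 2) (Fin v → ZMod 2)) | IsOrbitLine v f O}
        = Set.range (fun a : {x : Fin v → ZMod 2 // x ≠ 0 ∧ Tz v f x} => orb v f a.1) := by
      ext O
      simp only [Set.mem_setOf_eq, Set.mem_range]
      constructor
      · rintro ⟨⟨P, hP1, hPO, hncard⟩, hL⟩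
        obtain ⟨x, hx0, rfl⟩ := (finrank_one_iff P).1 hP1
        rw [orb_eq_mapMat] at hPO
        subst hPO
        have hfx := hnfix3 x hncard
        exact ⟨⟨x, hx0, (line_iff hvf x hx0 hfx).1 hL⟩, rfl⟩
      · rintro ⟨a, rfl⟩
        exact ⟨isPtOrbit3_orb hvf a.1 a.2.1 (hT a),
          (line_iff hvf a.1 a.2.1 (hT a)).2 a.2.2⟩
    have hcT : Fintype.card {x : Fin v → ZMod 2 // x ≠ 0 ∧ Tz v f x}
        = 2 ^ (v - f) - 1 := by
      rw [← Nat.card_eq_fintype_card]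
      exact card_T2 hmf
    rw [hset]
    rw [hcT] at key
    omega
  -- orbit triangles
  · have hz_zero : Hz v f (0 : Fin v → ZMod 2) := fun j _ => rfl
    have ha0 : ∀ a : {x : Fin v → ZMod 2 // ¬ Hz v f x ∧ ¬ Tz v f x}, a.1 ≠ 0 := by
      intro a h
      exact a.2.1 (h ▸ hz_zero)
    have hT : ∀ a : {x : Fin v → ZMod 2 // ¬ Hz v f x ∧ ¬ Tz v f x},
        a.1 ᵥ* Avf v f ≠ a.1 := by
      intro a h
      exact a.2.1 ((fixed_iff hvf a.1).1 h)
    have key := three_to_one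
      (α := {x : Fin v → ZMod 2 // ¬ Hz v f x ∧ ¬ Tz v f x})
      (fun a => orb v f a.1)
      (fun a => ⟨a.1 ᵥ* Avf v f, fun hh => a.2.1 ((hz_vm_iff hvf a.1).1 hh),
        fun hh => a.2.2 ((tz_vm_iff hvf a.1).1 hh)⟩)
      (fun a => ⟨fun h => hT a (congrArg Subtype.val h).symm,
        fun h => dist2 hvf a.1 (hT a) (congrArg Subtype.val h).symm,
        fun h => dist3 hvf a.1 (hT a) (congrArg Subtype.val h).symm⟩)
      (fun a b => by
        have h := orb_eq_iff hvf a.1 b.1 (ha0 a) (ha0 b)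
        simpa [Subtype.ext_iff] using h)
    have hset : {O : Set (Submodule (ZMod 2) (Fin v → ZMod 2)) | IsOrbitTriangle v f O}
        = Set.range (fun a : {x : Fin v → ZMod 2 // ¬ Hz v f x ∧ ¬ Tz v f x} =>
            orb v f a.1) := by
      ext O
      simp only [Set.mem_setOf_eq, Set.mem_range]
      constructor
      · rintro ⟨⟨P, hP1, hPO, hncard⟩, hnoL⟩
        obtain ⟨x, hx0, rfl⟩ := (finrank_one_iff P).1 hP1
        rw [orb_eq_mapMat] at hPO
        subst hPO
        have hfx := hnfix3 x hncard
        have hntz : ¬ Tz v f x := fun htz => hnoL ((line_iff hvf x hx0 hfx).2 htz)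
        have hnhz : ¬ Hz v f x := fun hhz => hfx ((fixed_iff hvf x).2 hhz)
        exact ⟨⟨x, hnhz, hntz⟩, rfl⟩
      · rintro ⟨a, rfl⟩
        exact ⟨isPtOrbit3_orb hvf a.1 (ha0 a) (hT a),
          fun hL => a.2.2 ((line_iff hvf a.1 (ha0 a) (hT a)).1 hL)⟩
    have hcT : Fintype.card {x : Fin v → ZMod 2 // ¬ Hz v f x ∧ ¬ Tz v f x}
        = (2 ^ (v - f) - 1) * (2 ^ f - 1) := by
      rw [← Nat.card_eq_fintype_card]
      exact card_T3 hmf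
    rw [hset]
    rw [hcT] at key
    generalize hq : (2 ^ (v - f) - 1) * (2 ^ f - 1) = q at *
    omega
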